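/- Let G be a finite abelian group with D(G) ≥ 4 and let G0 ⊆ G be a subset with Δ(G0) ≠ ∅ and min Δ(G0) ≥ ⌊exp(G)/2⌋. If A ∈ A(G0) satisfies k(A) < 1, then k(A) = (exp(G) − min Δ(G0))/exp(G), and every h ∈ supp(A) satisfies ord(h) = exp(G) and v_h(A) = 1. -/

import Mathlib

/- Common definitions: zero-sum sequences over a finite abelian group,
   sets of lengths, the system of sets of lengths, the Davenport constant,
   sets of distances, elasticities, AAPs, Δ₁(G), ρ(G,d,k), ρ(G,d), ρ*(G,d),
   cross numbers, K(G₀), K(G,d), LCN-sets, Δ*(G). -/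

open scoped Classical

section Defs

variable {G : Type*} [AddCommGroup G]

/-- The support of a sequence (multiset) over `G`. -/
def suppSet (A : Multiset G) : Set G := {g | g ∈ A}

/-- `A` is a minimal zero-sum sequence (an atom of `𝓑(G₀)`) over `G₀ ⊆ G`:
a nontrivial zero-sum sequence with terms in `G₀` such that every proper
nontrivial subsequence has nonzero sum. -/
def IsMinZeroSum (G0 : Set G) (A : Multiset G) : Prop :=
  A ≠ 0 ∧ (∀ g ∈ A, g ∈ G0) ∧ A.sum = 0 ∧
    ∀ T : Multiset G, T ≤ A → T.sum = 0 → T = 0 ∨ T = A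

/-- `B` is a zero-sum sequence over `G₀ ⊆ G` (an element of `𝓑(G₀)`). -/
def IsZeroSumSeq (G0 : Set G) (B : Multiset G) : Prop :=
  (∀ g ∈ B, g ∈ G0) ∧ B.sum = 0

/-- The set of lengths `L(B)` of a zero-sum sequence `B` over `G₀`:
all `k` such that `B` is a product of `k` atoms of `𝓑(G₀)`.
(For the trivial sequence this is `{0}`.) -/
def lengthSet (G0 : Set G) (B : Multiset G) : Set ℕ :=
  {k | ∃ U : Fin k → Multiset G, (∀ i, IsMinZeroSum G0 (U i)) ∧ B = ∑ i, U i}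

/-- The system of sets of lengths `𝓛(G₀)`. -/
def systemL (G0 : Set G) : Set (Set ℕ) :=
  {L | ∃ B : Multiset G, IsZeroSumSeq G0 B ∧ L = lengthSet G0 B}

/-- The Davenport constant `D(G)`: the maximal length of a minimal zero-sum
sequence over `G`. -/
noncomputable def davenport (G : Type*) [AddCommGroup G] : ℕ :=
  sSup {m | ∃ A : Multiset G, IsMinZeroSum (Set.univ : Set G) A ∧ Multiset.card A = m}

/-- The set of successive distances `Δ(L)` of a set `L ⊆ ℕ`. -/
def deltaOf (L : Set ℕ) : Set ℕ :=
  {d | 0 < d ∧ ∃ a, a ∈ L ∧ a + d ∈ L ∧ ∀ c ∈ L, ¬(a < c ∧ c < a + d)}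

/-- `Δ(G₀) = ⋃_{L ∈ 𝓛(G₀)} Δ(L)`. -/
def deltaG0 (G0 : Set G) : Set ℕ := ⋃ L ∈ systemL G0, deltaOf L

/-- `Δ*(G) = {min Δ(G₀) : G₀ ⊆ G with Δ(G₀) ≠ ∅}`. -/
def deltaStar (G : Type*) [AddCommGroup G] : Set ℕ :=
  {d | ∃ G0 : Set G, deltaG0 G0 ≠ ∅ ∧ d = sInf (deltaG0 G0)}

/-- The elasticity `ρ(L) = max L / min L` of a (finite) set `L ⊆ ℕ`,
with the convention `ρ({0}) = 1`. -/
noncomputable def rhoL (L : Set ℕ) : ℝ :=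
  if sInf L = 0 then 1 else ((sSup L : ℕ) : ℝ) / ((sInf L : ℕ) : ℝ)

/-- The elasticity `ρ(G₀) = sup {ρ(L) : L ∈ 𝓛(G₀)}`. -/
noncomputable def rhoG0 (G0 : Set G) : ℝ := sSup (rhoL '' systemL G0)

/-- `L` (a set of naturals) is an almost arithmetical progression (AAP)
with difference `d`, length `ℓ` and bound `M`:
`L = y + (L' ∪ {0, d, …, ℓd} ∪ L'') ⊆ y + dℤ` with `L' ⊆ [−M, −1]` and
`L'' ⊆ ℓd + [1, M]`. -/
def IsAAP (L : Set ℕ) (d ℓ M : ℕ) : Prop :=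
  ∃ (y : ℤ) (L1 L2 : Set ℤ),
    L1 ⊆ Set.Icc (-(M : ℤ)) (-1) ∧
    L2 ⊆ Set.Icc ((ℓ : ℤ) * d + 1) ((ℓ : ℤ) * d + M) ∧
    ((fun x : ℕ => (x : ℤ)) '' L) =
      (fun x => y + x) '' (L1 ∪ (fun i : ℤ => (d : ℤ) * i) '' Set.Icc (0 : ℤ) (ℓ : ℤ) ∪ L2) ∧
    (∀ x ∈ L, (d : ℤ) ∣ ((x : ℤ) - y))

/-- `Δ₁(G)`: the set of `d ∈ ℕ` such that for every `k` there is some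
`L ∈ 𝓛(G)` which is an AAP with difference `d` and length at least `k`. -/
def delta1 (G : Type*) [AddCommGroup G] : Set ℕ :=
  {d | 0 < d ∧ ∀ k : ℕ, ∃ L ∈ systemL (Set.univ : Set G), ∃ ℓ ≥ k, ∃ M : ℕ, IsAAP L d ℓ M}

/-- `ρ(G, d, k)`: the supremum of elasticities of sets of lengths of `G` which
are AAPs with difference `d` and length at least `k`. -/
noncomputable def rhoGdk (G : Type*) [AddCommGroup G] (d k : ℕ) : ℝ :=
  sSup (rhoL '' {L | L ∈ systemL (Set.univ : Set G) ∧ ∃ ℓ ≥ k, ∃ M : ℕ, IsAAP L d ℓ M})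

/-- `ρ(G, d)`: the limit of the decreasing sequence `(ρ(G, d, k))_k`,
i.e. its infimum. -/
noncomputable def rhoGd (G : Type*) [AddCommGroup G] (d : ℕ) : ℝ :=
  ⨅ k : ℕ, rhoGdk G d k

/-- `ρ*(G, d) = max {ρ(G₀) : G₀ ⊆ G non-half-factorial with d ∣ min Δ(G₀)}`. -/
noncomputable def rhoStar (G : Type*) [AddCommGroup G] (d : ℕ) : ℝ :=
  sSup {x | ∃ G0 : Set G, deltaG0 G0 ≠ ∅ ∧ d ∣ sInf (deltaG0 G0) ∧ x = rhoG0 G0}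

/-- The cross number `k(S) = Σ_{g ∈ S} 1/ord(g)` of a sequence `S`. -/
noncomputable def crossNum (S : Multiset G) : ℝ :=
  (S.map (fun g => (1 : ℝ) / (addOrderOf g))).sum

/-- `K(G₀) = max {k(A) : A ∈ 𝓐(G₀)}`, the cross number of `G₀`. -/
noncomputable def KG0 (G0 : Set G) : ℝ :=
  sSup {x | ∃ A : Multiset G, IsMinZeroSum G0 A ∧ x = crossNum A}

/-- `K(G, d) = max {K(G₀) : G₀ ⊆ G non-half-factorial with d ∣ min Δ(G₀)}`. -/
noncomputable def KGd (G : Type*) [AddCommGroup G] (d : ℕ) : ℝ :=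
  sSup {x | ∃ G0 : Set G, deltaG0 G0 ≠ ∅ ∧ d ∣ sInf (deltaG0 G0) ∧ x = KG0 G0}

/-- `G₀` is an LCN-set: `k(A) ≥ 1` for every atom `A` of `𝓑(G₀)`. -/
def IsLCN (G0 : Set G) : Prop :=
  ∀ A : Multiset G, IsMinZeroSum G0 A → 1 ≤ crossNum A

end Defs

section Proofs
set_option linter.unusedSectionVars false

open Multiset

variable {G : Type*} [AddCommGroup G]

lemma crossNum_zero : crossNum (0 : Multiset G) = 0 := by simp [crossNum]

lemma crossNum_add (S T : Multiset G) : crossNum (S + T) = crossNum S + crossNum T := by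
  simp [crossNum, Multiset.map_add, Multiset.sum_add]

lemma crossNum_nsmul (j : ℕ) (S : Multiset G) : crossNum (j • S) = j * crossNum S := by
  induction j with
  | zero => simp [crossNum_zero]
  | succ j ih => rw [succ_nsmul, crossNum_add, ih]; push_cast; ring

lemma crossNum_replicate (c : ℕ) (g : G) :
    crossNum (Multiset.replicate c g) = c * (1 / (addOrderOf g : ℝ)) := by
  simp [crossNum, Multiset.map_replicate, Multiset.sum_replicate, nsmul_eq_mul]

lemma crossNum_replicate_order [Finite G] (g : G) :
    crossNum (Multiset.replicate (addOrderOf g) g) = 1 := by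
  rw [crossNum_replicate]
  have h : (addOrderOf g : ℝ) ≠ 0 := by
    exact_mod_cast (addOrderOf_pos g).ne'
  field_simp

lemma sum_nsmul_multiset (j : ℕ) (S : Multiset G) : (j • S).sum = j • S.sum := by
  induction j with
  | zero => simp
  | succ j ih => rw [succ_nsmul, succ_nsmul, Multiset.sum_add, ih]

lemma crossNum_finset_sum {ι : Type*} (s : Finset ι) (f : ι → Multiset G) :
    crossNum (∑ i ∈ s, f i) = ∑ i ∈ s, crossNum (f i) := by
  induction s using Finset.cons_induction with
  | empty => simp [crossNum_zero]
  | cons a s ha ih => rw [Finset.sum_cons, Finset.sum_cons, crossNum_add, ih]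

lemma crossNum_fin_sum {k : ℕ} (U : Fin k → Multiset G) :
    crossNum (∑ i, U i) = ∑ i, crossNum (U i) :=
  crossNum_finset_sum _ _

lemma multisum_finset_sum {ι : Type*} (s : Finset ι) (f : ι → Multiset (Multiset G)) :
    (∑ i ∈ s, f i).sum = ∑ i ∈ s, (f i).sum := by
  induction s using Finset.cons_induction with
  | empty => simp
  | cons a s ha ih => rw [Finset.sum_cons, Finset.sum_cons, Multiset.sum_add, ih]

lemma crossNum_msum_eq_card (M : Multiset (Multiset G)) (h : ∀ V ∈ M, crossNum V = 1) :
    crossNum M.sum = Multiset.card M := by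
  induction M using Multiset.induction with
  | empty => simp [crossNum_zero]
  | cons V M ih =>
      rw [Multiset.sum_cons, crossNum_add, h V (Multiset.mem_cons_self ..),
        ih (fun W hW => h W (Multiset.mem_cons_of_mem hW))]
      simp
      ring

/-- an atom of the form `g^{ord g}`. -/
lemma atom_replicate_order [Finite G] {G0 : Set G} {g : G} (hg : g ∈ G0) :
    IsMinZeroSum G0 (Multiset.replicate (addOrderOf g) g) := by
  have hpos : 0 < addOrderOf g := addOrderOf_pos g
  refine ⟨fun h => hpos.ne' (by simpa using congrArg Multiset.card h), ?_, ?_, ?_⟩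
  · intro x hx; rw [Multiset.eq_of_mem_replicate hx]; exact hg
  · rw [Multiset.sum_replicate]; exact addOrderOf_nsmul_eq_zero g
  · intro T hT hTsum
    obtain ⟨c, hc, rfl⟩ := (Multiset.le_replicate_iff ..).mp hT
    rw [Multiset.sum_replicate] at hTsum
    have : addOrderOf g ∣ c := addOrderOf_dvd_of_nsmul_eq_zero hTsum
    rcases hc.lt_or_eq with h | h
    · left
      rw [Nat.eq_zero_of_dvd_of_lt this h, Multiset.replicate_zero]
    · right
      rw [h]

lemma single_mem_lengthSet {G0 : Set G} {U : Multiset G} (hU : IsMinZeroSum G0 U) :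
    1 ∈ lengthSet G0 U :=
  ⟨fun _ => U, fun _ => hU, by simp⟩

lemma add_mem_lengthSet {G0 : Set G} {B1 B2 : Multiset G} {x y : ℕ}
    (hx : x ∈ lengthSet G0 B1) (hy : y ∈ lengthSet G0 B2) :
    x + y ∈ lengthSet G0 (B1 + B2) := by
  obtain ⟨U, hU, rfl⟩ := hx
  obtain ⟨V, hV, rfl⟩ := hy
  refine ⟨Fin.addCases U V, fun i => ?_, ?_⟩
  · refine Fin.addCases (fun i => ?_) (fun i => ?_) i <;> simp [hU _, hV _]
  · rw [Fin.sum_univ_add]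
    simp

lemma const_mem_lengthSet {G0 : Set G} {A : Multiset G} (hA : IsMinZeroSum G0 A) (j : ℕ) :
    j ∈ lengthSet G0 (j • A) :=
  ⟨fun _ => A, fun _ => hA, by simp [Finset.sum_const]⟩

lemma multiset_mem_lengthSet {G0 : Set G} (M : Multiset (Multiset G))
    (hM : ∀ V ∈ M, IsMinZeroSum G0 V) :
    Multiset.card M ∈ lengthSet G0 M.sum := by
  induction M using Multiset.induction with
  | empty => exact ⟨fun i => 0, fun i => absurd i.2 (by simp), by simp⟩
  | cons V M ih =>
      have h1 : 1 ∈ lengthSet G0 V := single_mem_lengthSet (hM V (Multiset.mem_cons_self ..))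
      have h2 := ih (fun W hW => hM W (Multiset.mem_cons_of_mem hW))
      have := add_mem_lengthSet h1 h2
      simpa [Multiset.sum_cons, add_comm] using this

/-- every nontrivial zero-sum sequence has a factorization into atoms. -/
lemma exists_factorization {G0 : Set G} :
    ∀ (c : ℕ) (S : Multiset G), Multiset.card S ≤ c → S ≠ 0 → (∀ g ∈ S, g ∈ G0) →
      S.sum = 0 → ∃ t, 1 ≤ t ∧ t ∈ lengthSet G0 S := by
  intro c
  induction c with
  | zero =>
      intro S hc hS _ _
      exact absurd (Multiset.card_eq_zero.mp (Nat.le_zero.mp hc)) hS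
  | succ c ih =>
      intro S hc hS hSG hSsum
      set P : Set ℕ := {k | ∃ T : Multiset G, T ≤ S ∧ T ≠ 0 ∧ T.sum = 0 ∧ Multiset.card T = k}
        with hP
      have hPne : P.Nonempty := ⟨Multiset.card S, S, le_refl _, hS, hSsum, rfl⟩
      obtain ⟨T, hTS, hTne, hTsum, hTcard⟩ := Nat.sInf_mem hPne
      have hTatom : IsMinZeroSum G0 T := by
        refine ⟨hTne, fun g hg => hSG g (Multiset.mem_of_le hTS hg), hTsum, ?_⟩
        intro T' hT' hT'sum
        by_contra hcon
        push_neg at hcon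
        obtain ⟨h1, h2⟩ := hcon
        have hlt : Multiset.card T' < Multiset.card T := by
          rcases lt_or_eq_of_le (Multiset.card_le_card hT') with h | h
          · exact h
          · exact absurd (Multiset.eq_of_le_of_card_le hT' h.ge) h2
        have : Multiset.card T' ∈ P := ⟨T', hT'.trans hTS, h1, hT'sum, rfl⟩
        have := Nat.sInf_le this
        omega
      rcases eq_or_ne (S - T) 0 with h0 | h0
      · have hadd : (S - T) + T = S := tsub_add_cancel_of_le hTS
        rw [h0, zero_add] at hadd
        subst hadd
        exact ⟨1, le_refl _, single_mem_lengthSet hTatom⟩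
      · have hadd : (S - T) + T = S := tsub_add_cancel_of_le hTS
        have hcard : Multiset.card (S - T) ≤ c := by
          have := congrArg (Multiset.card (α := G)) hadd
          rw [Multiset.card_add] at this
          have hT1 : 1 ≤ Multiset.card T := by
            rw [Nat.one_le_iff_ne_zero]
            simpa [Multiset.card_eq_zero] using hTne
          omega
        have hsub : (S - T).sum = 0 := by
          have := congrArg Multiset.sum hadd
          rw [Multiset.sum_add] at this
          rw [hTsum, add_zero] at this
          rw [this, hSsum]
        obtain ⟨t, ht1, htmem⟩ := ih (S - T) hcard h0
          (fun g hg => hSG g (Multiset.mem_of_le (tsub_le_self) hg)) hsub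
        refine ⟨t + 1, by omega, ?_⟩
        have := add_mem_lengthSet htmem (single_mem_lengthSet hTatom)
        rwa [hadd] at this

lemma mem_deltaG0 {G0 : Set G} {B : Multiset G} (hB : IsZeroSumSeq G0 B) {d' : ℕ}
    (hd : d' ∈ deltaOf (lengthSet G0 B)) : d' ∈ deltaG0 G0 := by
  simp only [deltaG0, Set.mem_iUnion]
  exact ⟨lengthSet G0 B, ⟨B, hB, rfl⟩, hd⟩

/-- Distinct lengths of the same zero-sum sequence differ by at least `min Δ(G₀)`. -/
lemma gap_ge {G0 : Set G} {B : Multiset G} (hB : IsZeroSumSeq G0 B) {x y : ℕ}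
    (hx : x ∈ lengthSet G0 B) (hy : y ∈ lengthSet G0 B) (hxy : x < y) :
    x + sInf (deltaG0 G0) ≤ y := by
  set L := lengthSet G0 B
  set Sset : Set ℕ := L ∩ Set.Iio y with hSset
  have hne : Sset.Nonempty := ⟨x, hx, hxy⟩
  have hbdd : BddAbove Sset := ⟨y, fun z hz => le_of_lt hz.2⟩
  obtain ⟨hwL, hwy⟩ := Nat.sSup_mem hne hbdd
  set w := sSup Sset
  have hxw : x ≤ w := le_csSup hbdd ⟨hx, hxy⟩
  have hwlt : w < y := hwy
  have hdel : y - w ∈ deltaOf L := by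
    refine ⟨by omega, w, hwL, ?_, ?_⟩
    · rwa [Nat.add_sub_cancel' hwlt.le]
    · intro c hc
      rintro ⟨h1, h2⟩
      rw [Nat.add_sub_cancel' hwlt.le] at h2
      have : c ≤ w := le_csSup hbdd ⟨hc, h2⟩
      omega
  have := Nat.sInf_le (mem_deltaG0 hB hdel)
  omega

/-- Rigidity: an element of `Δ(G₀)` below `2 · min Δ(G₀)` equals `min Δ(G₀)`. -/
lemma delta_rigid {G0 : Set G} (hne : deltaG0 G0 ≠ ∅) {d2 : ℕ}
    (hd2 : d2 ∈ deltaG0 G0) (hlt : d2 < 2 * sInf (deltaG0 G0)) :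
    d2 = sInf (deltaG0 G0) := by
  set d := sInf (deltaG0 G0) with hd
  have hdmem : d ∈ deltaG0 G0 := Nat.sInf_mem (Set.nonempty_iff_ne_empty.mpr hne)
  have hdle : d ≤ d2 := Nat.sInf_le hd2
  rcases eq_or_lt_of_le hdle with h | h
  · exact h.symm
  · exfalso
    simp only [deltaG0, Set.mem_iUnion] at hdmem hd2
    obtain ⟨L1, ⟨B1, hB1, rfl⟩, _, a, ha1, ha2, _⟩ := hdmem
    obtain ⟨L2, ⟨B2, hB2, rfl⟩, _, b, hb1, hb2, _⟩ := hd2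
    have hm1 : a + d + b ∈ lengthSet G0 (B1 + B2) := add_mem_lengthSet ha2 hb1
    have hm2 : a + (b + d2) ∈ lengthSet G0 (B1 + B2) := add_mem_lengthSet ha1 hb2
    have hzs : IsZeroSumSeq G0 (B1 + B2) := by
      refine ⟨fun g hg => ?_, by rw [Multiset.sum_add, hB1.2, hB2.2, add_zero]⟩
      rcases Multiset.mem_add.mp hg with h | h
      · exact hB1.1 g h
      · exact hB2.1 g h
    have := gap_ge hzs hm1 hm2 (by omega)
    omega

lemma crossNum_card_le [Finite G] (U : Multiset G) :
    (Multiset.card U : ℝ) ≤ (AddMonoid.exponent G : ℝ) * crossNum U := by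
  set n := AddMonoid.exponent G with hn
  have hnpos : 0 < n := Nat.pos_of_ne_zero AddMonoid.exponent_ne_zero_of_finite
  have key : ((U.map fun _ => (1 : ℝ))).sum ≤ (U.map fun g => (n : ℝ) * (1 / (addOrderOf g : ℝ))).sum := by
    refine Multiset.sum_map_le_sum_map _ _ (fun g _ => ?_)
    have h1 : 0 < addOrderOf g := addOrderOf_pos g
    have h2 : addOrderOf g ≤ n := Nat.le_of_dvd hnpos (AddMonoid.addOrder_dvd_exponent g)
    rw [mul_one_div, le_div_iff₀ (by exact_mod_cast h1), one_mul]
    exact_mod_cast h2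
  have h3 : ((U.map fun _ => (1 : ℝ))).sum = (Multiset.card U : ℝ) := by
    rw [Multiset.map_const', Multiset.sum_replicate, nsmul_eq_mul, mul_one]
  have h4 : (U.map fun g => (n : ℝ) * (1 / (addOrderOf g : ℝ))).sum = (n : ℝ) * crossNum U := by
    rw [crossNum, Multiset.sum_map_mul_left]
  rw [h3, h4] at key
  exact key

/-- Main part (i): any atom of cross number `< 1` has
`k(A) = (exp G - min Δ(G₀)) / exp G`. -/
lemma main1 [Fintype G] {G0 : Set G} (hne : deltaG0 G0 ≠ ∅)
    (hmin : AddMonoid.exponent G / 2 ≤ sInf (deltaG0 G0))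
    {U : Multiset G} (hU : IsMinZeroSum G0 U) (hk : crossNum U < 1) :
    crossNum U = ((AddMonoid.exponent G : ℝ) - ((sInf (deltaG0 G0) : ℕ) : ℝ)) /
        (AddMonoid.exponent G : ℝ) ∧ sInf (deltaG0 G0) + 2 ≤ AddMonoid.exponent G := by
  set n := AddMonoid.exponent G with hn
  set d := sInf (deltaG0 G0) with hd
  have hnpos : 0 < n := Nat.pos_of_ne_zero AddMonoid.exponent_ne_zero_of_finite
  have hdpos : 0 < d := by
    have := Nat.sInf_mem (Set.nonempty_iff_ne_empty.mpr hne)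
    simp only [deltaG0, Set.mem_iUnion] at this
    obtain ⟨L, _, hpos, _⟩ := this
    exact hpos
  obtain ⟨hU0, hUG, hUsum, hUmin⟩ := hU
  have hord : ∀ g : G, addOrderOf g ∣ n := fun g => AddMonoid.addOrder_dvd_exponent g
  -- `U` has at least two elements
  have hcard2 : 2 ≤ Multiset.card U := by
    by_contra hcon
    push_neg at hcon
    interval_cases h : Multiset.card U
    · exact hU0 (Multiset.card_eq_zero.mp h)
    · obtain ⟨g, rfl⟩ := Multiset.card_eq_one.mp h
      have hg0 : g = 0 := by simpa using hUsum
      have : crossNum {g} = 1 := by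
        rw [hg0]; simp [crossNum, addOrderOf_zero]
      rw [this] at hk
      exact lt_irrefl _ hk
  -- the power-atom factorization of `n • U`
  set M : Multiset (Multiset G) := ∑ g ∈ U.toFinset,
    Multiset.replicate (n / addOrderOf g * U.count g) (Multiset.replicate (addOrderOf g) g)
    with hM
  have hMsum : M.sum = n • U := by
    rw [hM, multisum_finset_sum]
    conv_rhs => rw [← Multiset.toFinset_sum_count_nsmul_eq U]
    rw [Finset.smul_sum]
    refine Finset.sum_congr rfl (fun g hg => ?_)
    rw [Multiset.sum_replicate, Multiset.nsmul_replicate, ← mul_smul,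
      Multiset.nsmul_singleton]
    congr 1
    have h1 := Nat.div_mul_cancel (hord g)
    calc n / addOrderOf g * U.count g * addOrderOf g
        = n / addOrderOf g * addOrderOf g * U.count g := by ring
      _ = n * U.count g := by rw [h1]
  have hMatoms : ∀ V ∈ M, IsMinZeroSum G0 V := by
    intro V hV
    rw [hM, Multiset.mem_sum] at hV
    obtain ⟨g, hg, hVmem⟩ := hV
    rw [Multiset.eq_of_mem_replicate hVmem]
    exact atom_replicate_order (hUG g (Multiset.mem_toFinset.mp hg))
  set K := Multiset.card M with hK
  have hKmem : K ∈ lengthSet G0 (n • U) := hMsum ▸ multiset_mem_lengthSet M hMatoms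
  have hnmem : n ∈ lengthSet G0 (n • U) := const_mem_lengthSet ⟨hU0, hUG, hUsum, hUmin⟩ n
  have hKcross : (K : ℝ) = (n : ℝ) * crossNum U := by
    have h1 : crossNum M.sum = (K : ℝ) := by
      refine crossNum_msum_eq_card M (fun V hV => ?_)
      rw [hM, Multiset.mem_sum] at hV
      obtain ⟨g, hg, hVmem⟩ := hV
      rw [Multiset.eq_of_mem_replicate hVmem]
      exact crossNum_replicate_order g
    rw [hMsum, crossNum_nsmul] at h1
    exact h1.symm
  have hK2 : 2 ≤ K := by
    have h1 := crossNum_card_le (G := G) U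
    rw [← hn, ← hKcross] at h1
    have h2 : (2 : ℝ) ≤ (K : ℝ) := le_trans (by exact_mod_cast hcard2) h1
    exact_mod_cast h2
  have hKn : K < n := by
    have h1 : (K : ℝ) < (n : ℝ) := by
      rw [hKcross]
      calc (n : ℝ) * crossNum U < (n : ℝ) * 1 :=
        mul_lt_mul_of_pos_left hk (by exact_mod_cast hnpos)
      _ = (n : ℝ) := mul_one _
    exact_mod_cast h1
  have hzs : IsZeroSumSeq G0 (n • U) :=
    ⟨fun g hg => hUG g (Multiset.mem_of_mem_nsmul hg),
      by rw [sum_nsmul_multiset, hUsum, smul_zero]⟩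
  have hgap : K + d ≤ n := gap_ge hzs hKmem hnmem hKn
  have h2d : n ≤ 2 * d + 1 := by omega
  have hdel : n - K ∈ deltaOf (lengthSet G0 (n • U)) := by
    refine ⟨by omega, K, hKmem, ?_, ?_⟩
    · rw [Nat.add_sub_cancel' hKn.le]
      exact hnmem
    · rw [Nat.add_sub_cancel' hKn.le]
      intro z hz
      rintro ⟨h1, h2⟩
      have g1 := gap_ge hzs hKmem hz h1
      have g2 := gap_ge hzs hz hnmem h2
      omega
  have hd2mem : n - K ∈ deltaG0 G0 := mem_deltaG0 hzs hdel
  have heq : n - K = d := delta_rigid hne hd2mem (by omega)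
  have hKval : K = n - d := by omega
  constructor
  · have hcast : (K : ℝ) = (n : ℝ) - (d : ℝ) := by
      have h5 : K + d = n := by omega
      have h6 : ((K + d : ℕ) : ℝ) = (n : ℝ) := by rw [h5]
      push_cast at h6
      linarith
    rw [eq_div_iff (by exact_mod_cast hnpos.ne' : (n : ℝ) ≠ 0)]
    rw [← hcast, hKcross]
    ring
  · omega

/-- Every atom has cross number at least `(exp G - min Δ(G₀)) / exp G`. -/
lemma dichot [Fintype G] {G0 : Set G} (hne : deltaG0 G0 ≠ ∅)
    (hmin : AddMonoid.exponent G / 2 ≤ sInf (deltaG0 G0))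
    {V : Multiset G} (hV : IsMinZeroSum G0 V) :
    ((AddMonoid.exponent G : ℝ) - ((sInf (deltaG0 G0) : ℕ) : ℝ)) /
        (AddMonoid.exponent G : ℝ) ≤ crossNum V := by
  by_cases hlt : crossNum V < 1
  · exact (main1 hne hmin hV hlt).1.ge
  · push_neg at hlt
    have hnpos : 0 < AddMonoid.exponent G :=
      Nat.pos_of_ne_zero AddMonoid.exponent_ne_zero_of_finite
    have h1 : ((AddMonoid.exponent G : ℝ) - ((sInf (deltaG0 G0) : ℕ) : ℝ)) /
        (AddMonoid.exponent G : ℝ) ≤ 1 := by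
      rw [div_le_one (by exact_mod_cast hnpos)]
      have : (0 : ℝ) ≤ ((sInf (deltaG0 G0) : ℕ) : ℝ) := by positivity
      linarith
    linarith


end Proofs

/-- Let `G` be a finite abelian group with `D(G) ≥ 4` and
`G₀ ⊆ G` with `Δ(G₀) ≠ ∅` and `min Δ(G₀) ≥ ⌊exp(G)/2⌋`. If `A ∈ 𝓐(G₀)`
has `k(A) < 1`, then `k(A) = (exp(G) − min Δ(G₀))/exp(G)`, and every
`h ∈ supp(A)` satisfies `ord(h) = exp(G)` and `v_h(A) = 1`. -/
theorem stmt17 {G : Type*} [AddCommGroup G] [Fintype G]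
    (hD : 4 ≤ davenport G)
    (G0 : Set G) (hne : deltaG0 G0 ≠ ∅)
    (hmin : AddMonoid.exponent G / 2 ≤ sInf (deltaG0 G0))
    (A : Multiset G) (hA : IsMinZeroSum G0 A) (hk : crossNum A < 1) :
    crossNum A = ((AddMonoid.exponent G : ℝ) - ((sInf (deltaG0 G0) : ℕ) : ℝ)) /
        (AddMonoid.exponent G : ℝ) ∧
    ∀ h ∈ A, addOrderOf h = AddMonoid.exponent G ∧ A.count h = 1 := by
  obtain ⟨hcross, hdn⟩ := main1 hne hmin hA hk
  set n := AddMonoid.exponent G with hn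
  set d := sInf (deltaG0 G0) with hd
  refine ⟨hcross, ?_⟩
  intro h hh
  have hnpos : 0 < n := Nat.pos_of_ne_zero AddMonoid.exponent_ne_zero_of_finite
  have hdpos : 0 < d := by
    have := Nat.sInf_mem (Set.nonempty_iff_ne_empty.mpr hne)
    simp only [deltaG0, Set.mem_iUnion] at this
    obtain ⟨L, _, hpos, _⟩ := this
    exact hpos
  obtain ⟨hA0, hAG, hAsum, hAmin⟩ := hA
  set m := addOrderOf h with hm
  set v := A.count h with hv
  have hv1 : 1 ≤ v := Multiset.count_pos.mpr hh
  have hmdvd : m ∣ n := AddMonoid.addOrder_dvd_exponent h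
  have hm1 : 0 < m := addOrderOf_pos h
  by_contra hcon
  push_neg at hcon
  -- there is an element of `A` different from `h`
  have hexists : ∃ g ∈ A, g ≠ h := by
    by_contra hex
    push_neg at hex
    have hrep : A = Multiset.replicate (Multiset.card A) h :=
      Multiset.eq_replicate_of_mem hex
    have hsum' : (Multiset.card A) • h = 0 := by
      rw [← Multiset.sum_replicate, ← hrep, hAsum]
    have hdvd : m ∣ Multiset.card A := addOrderOf_dvd_of_nsmul_eq_zero hsum'
    have hcpos : 0 < Multiset.card A := Multiset.card_pos.mpr hA0
    have hmle : m ≤ Multiset.card A := Nat.le_of_dvd hcpos hdvd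
    have hle : Multiset.replicate m h ≤ A := by
      rw [hrep]
      exact (Multiset.replicate_le_replicate h).mpr hmle
    rcases hAmin _ hle (by rw [Multiset.sum_replicate]; exact addOrderOf_nsmul_eq_zero h)
      with h0 | hAeq
    · exact absurd (by simpa using congrArg Multiset.card h0) hm1.ne'
    · rw [← hAeq, crossNum_replicate_order] at hk
      exact lt_irrefl _ hk
  obtain ⟨g, hgA, hgh⟩ := hexists
  have hcardA : v + 1 ≤ Multiset.card A := by
    have hrle : Multiset.replicate v h ≤ A := Multiset.le_count_iff_replicate_le.mp le_rfl
    have hadd : (A - Multiset.replicate v h) + Multiset.replicate v h = A :=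
      tsub_add_cancel_of_le hrle
    have hgmem : g ∈ A - Multiset.replicate v h := by
      rw [← Multiset.count_pos, Multiset.count_sub, Multiset.count_replicate, if_neg (Ne.symm hgh)]
      rw [Nat.sub_zero]
      exact Multiset.count_pos.mpr hgA
    have hc1 := congrArg Multiset.card hadd
    rw [Multiset.card_add, Multiset.card_replicate] at hc1
    have hc2 : 0 < Multiset.card (A - Multiset.replicate v h) := by
      rw [Multiset.card_pos]
      intro h0
      rw [h0] at hgmem
      simp at hgmem
    omega
  -- choice of the exponent `j`
  set j := if m = n then (n + 1) / 2 else m with hj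
  have hjm : m ≤ j * v := by
    by_cases hmn : m = n
    · have hv2 : 2 ≤ v := by
        have := hcon hmn
        omega
      have hjval : j = (n + 1) / 2 := by rw [hj, if_pos hmn]
      calc m ≤ (n + 1) / 2 * 2 := by omega
        _ ≤ (n + 1) / 2 * v := Nat.mul_le_mul_left _ hv2
        _ = j * v := by rw [hjval]
    · have hjval : j = m := by rw [hj, if_neg hmn]
      calc m = m * 1 := (mul_one m).symm
        _ ≤ m * v := Nat.mul_le_mul_left m hv1
        _ = j * v := by rw [hjval]
  have hj1 : 1 ≤ j := by
    by_cases hmn : m = n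
    · rw [hj, if_pos hmn]; omega
    · rw [hj, if_neg hmn]; omega
  have hrle : Multiset.replicate m h ≤ j • A := by
    rw [Multiset.le_iff_count]
    intro x
    rw [Multiset.count_nsmul, Multiset.count_replicate]
    by_cases hx : h = x
    · rw [if_pos hx, ← hx]
      exact hjm
    · rw [if_neg hx]
      exact Nat.zero_le _
  set S := j • A - Multiset.replicate m h with hS
  have hSadd : S + Multiset.replicate m h = j • A := tsub_add_cancel_of_le hrle
  have hSsum : S.sum = 0 := by
    have h1 := congrArg Multiset.sum hSadd
    rw [Multiset.sum_add, Multiset.sum_replicate, sum_nsmul_multiset, hAsum, smul_zero,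
      addOrderOf_nsmul_eq_zero, add_zero] at h1
    exact h1
  have hSG : ∀ x ∈ S, x ∈ G0 := fun x hx =>
    hAG x (Multiset.mem_of_mem_nsmul (Multiset.mem_of_le tsub_le_self hx))
  have hScard : Multiset.card S + m = j * Multiset.card A := by
    have h1 := congrArg Multiset.card hSadd
    rwa [Multiset.card_add, Multiset.card_replicate, Multiset.card_nsmul] at h1
  have hSne : S ≠ 0 := by
    intro h0
    rw [h0] at hScard
    simp only [Multiset.card_zero, zero_add] at hScard
    have h2 : j * (v + 1) ≤ j * Multiset.card A := Nat.mul_le_mul_left j hcardA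
    have h3 : j * (v + 1) = j * v + j := by ring
    omega
  obtain ⟨t, ht1, htmem⟩ := exists_factorization (Multiset.card S) S le_rfl hSne hSG hSsum
  have hrep_atom : IsMinZeroSum G0 (Multiset.replicate m h) :=
    atom_replicate_order (hAG h hh)
  have h1t : 1 + t ∈ lengthSet G0 (j • A) := by
    have h1 := add_mem_lengthSet (single_mem_lengthSet hrep_atom) htmem
    rwa [add_comm (Multiset.replicate m h) S, hSadd] at h1
  have hjmem : j ∈ lengthSet G0 (j • A) := const_mem_lengthSet ⟨hA0, hAG, hAsum, hAmin⟩ j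
  set κ : ℝ := ((n : ℝ) - ((d : ℕ) : ℝ)) / (n : ℝ) with hκ
  have hdn' : (d : ℝ) + 2 ≤ (n : ℝ) := by exact_mod_cast hdn
  have hnpos' : (0 : ℝ) < (n : ℝ) := by exact_mod_cast hnpos
  have hdpos' : (0 : ℝ) < (d : ℝ) := by exact_mod_cast hdpos
  have hκpos : 0 < κ := by
    apply div_pos _ hnpos'
    linarith
  have hκlt1 : κ < 1 := by
    rw [hκ, div_lt_one hnpos']
    linarith
  have htκ : (t : ℝ) * κ ≤ crossNum S := by
    obtain ⟨V, hV, hVeq⟩ := htmem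
    rw [hVeq, crossNum_fin_sum]
    calc (t : ℝ) * κ = ∑ _i : Fin t, κ := by
          rw [Finset.sum_const, Finset.card_univ, Fintype.card_fin, nsmul_eq_mul]
      _ ≤ ∑ i, crossNum (V i) :=
          Finset.sum_le_sum (fun i _ => dichot hne hmin (hV i))
  have hcs : crossNum S = (j : ℝ) * κ - 1 := by
    have h1 := congrArg crossNum hSadd
    rw [crossNum_add, crossNum_replicate_order, crossNum_nsmul, hcross] at h1
    linarith
  have hjt : t + 2 ≤ j := by
    by_contra hcon2
    push_neg at hcon2
    have hjle : (j : ℝ) ≤ (t : ℝ) + 1 := by exact_mod_cast Nat.lt_succ_iff.mp hcon2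
    nlinarith
  have hzs : IsZeroSumSeq G0 (j • A) :=
    ⟨fun x hx => hAG x (Multiset.mem_of_mem_nsmul hx),
      by rw [sum_nsmul_multiset, hAsum, smul_zero]⟩
  have hgap := gap_ge hzs h1t hjmem (by omega)
  by_cases hmn : m = n
  · have hjval : j = (n + 1) / 2 := by rw [hj, if_pos hmn]
    omega
  · have hjval : j = m := by rw [hj, if_neg hmn]
    have h2m : 2 * m ≤ n := by
      obtain ⟨c, hc⟩ := hmdvd
      have hc2 : 2 ≤ c := by
        by_contra hcc
        push_neg at hcc
        interval_cases c
        · omega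
        · omega
      calc 2 * m ≤ c * m := Nat.mul_le_mul_right m hc2
        _ = n := by rw [hc, mul_comm]
    omega
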